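/- Let q = 2^r and for β ∈ F_q let N_{DC⁺(n,q)}(β) = |{w ∈ DC⁺(n,q) : Tr w = β}|. Then: (a) for every even n ≥ 4 and every q, and also for n = 2 and every q ≥ 4, N_{DC⁺(n,q)}(β) > 0 for all β ∈ F_q; (b) for n = 2 and q = 2, N_{DC⁺(2,2)}(1) = 0 and N_{DC⁺(2,2)}(0) = 48. -/

import Mathlib

open scoped Classical
open Finset Matrix

noncomputable section

/-- The trace map `tr : F_q → F_2`, viewed inside `F`:
`tr(x) = x + x² + ⋯ + x^(2^(r−1))`. -/
def trF (F : Type*) [Field F] (r : ℕ) (x : F) : F :=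
  ∑ i ∈ Finset.range r, x ^ (2 ^ i)

/-- The canonical additive character `λ(x) = (−1)^(tr x)`, valued in `ℚ`. -/
def lam (F : Type*) [Field F] (r : ℕ) (x : F) : ℚ :=
  if trF F r x = 0 then 1 else -1

/-- The Kloosterman sum `K(λ;a)`. -/
def Kl (F : Type*) [Field F] [Fintype F] (r : ℕ) (a : F) : ℚ :=
  ∑ α : Fˣ, lam F r ((α : F) + a * ((α : F))⁻¹)

/-- The 2-dimensional Kloosterman sum `K₂(λ;a)`. -/
def Kl2 (F : Type*) [Field F] [Fintype F] (r : ℕ) (a : F) : ℚ :=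
  ∑ α : Fˣ, ∑ β : Fˣ, lam F r ((α : F) + (β : F) + a * ((α : F))⁻¹ * ((β : F))⁻¹)

/-- The m-dimensional Kloosterman sum `K_m(λ;a)`; `K₀(λ;a) = λ(a)`. -/
def Klm (F : Type*) [Field F] [Fintype F] (r m : ℕ) (a : F) : ℚ :=
  ∑ α : Fin m → Fˣ, lam F r ((∑ i, ((α i : F))) + a * ∏ i, ((α i : F))⁻¹)

/-- Power moments of Kloosterman sums, `MK^h`. -/
def MK (F : Type*) [Field F] [Fintype F] (r h : ℕ) : ℚ :=
  ∑ a : Fˣ, (Kl F r (a : F)) ^ h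

/-- Power moments of 2-dimensional Kloosterman sums, `MK₂^h`. -/
def MK2 (F : Type*) [Field F] [Fintype F] (r h : ℕ) : ℚ :=
  ∑ a : Fˣ, (Kl2 F r (a : F)) ^ h

/-- Stirling numbers of the second kind. -/
def stirl (h t : ℕ) : ℚ :=
  (1 / (t.factorial : ℚ)) *
    ∑ j ∈ Finset.range (t + 1), (-1 : ℚ) ^ (t - j) * (t.choose j : ℚ) * (j : ℚ) ^ h

/-- Binomial coefficient `binom(b,a)` with the convention that it is `0`
when `a < 0` or `a > b`. -/
def binomQ (b a : ℤ) : ℚ :=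
  if 0 ≤ a ∧ a ≤ b then (b.toNat.choose a.toNat : ℚ) else 0

/-- The q-binomial coefficient `[n,r]_q`. -/
def qbinom (q n r : ℕ) : ℚ :=
  ∏ j ∈ Finset.range r, ((q : ℚ) ^ (n - j) - 1) / ((q : ℚ) ^ (r - j) - 1)

/-- `A⁻(n,q)`. -/
def Aneg (q n : ℕ) : ℚ :=
  (q : ℚ) ^ ((5 * n ^ 2 - 1) / 4) * qbinom q n 1 *
    ∏ j ∈ Finset.range ((n - 1) / 2), ((q : ℚ) ^ (2 * (j + 1) - 1) - 1)

/-- `B⁻(n,q)`. -/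
def Bneg (q n : ℕ) : ℚ :=
  (q : ℚ) ^ ((n - 1) ^ 2 / 4) * ((q : ℚ) ^ n - 1) *
    ∏ j ∈ Finset.range ((n - 1) / 2), ((q : ℚ) ^ (2 * (j + 1)) - 1)

/-- `A⁺(n,q)`. -/
def Apos (q n : ℕ) : ℚ :=
  (q : ℚ) ^ ((5 * n ^ 2 - 2 * n) / 4) * qbinom q n 2 *
    ∏ j ∈ Finset.range ((n - 2) / 2), ((q : ℚ) ^ (2 * (j + 1) - 1) - 1)

/-- `B⁺(n,q)`. -/
def Bpos (q n : ℕ) : ℚ :=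
  (q : ℚ) ^ ((n - 2) ^ 2 / 4) * ((q : ℚ) ^ n - 1) * ((q : ℚ) ^ (n - 1) - 1) *
    ∏ j ∈ Finset.range ((n - 2) / 2), ((q : ℚ) ^ (2 * (j + 1)) - 1)

/-- The type of `2n × 2n` matrices over `F`. -/
abbrev Mat (F : Type*) (n : ℕ) := Matrix (Fin n ⊕ Fin n) (Fin n ⊕ Fin n) F

/-- The maximal parabolic subgroup `P(2n,q)` of `Sp(2n,q)`, as a set of matrices. -/
def Pmat (F : Type*) [Field F] (n : ℕ) : Set (Mat F n) :=
  {w | ∃ A B : Matrix (Fin n) (Fin n) F, IsUnit A ∧ Bᵀ = B ∧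
        w = Matrix.fromBlocks A 0 0 (A⁻¹)ᵀ * Matrix.fromBlocks 1 B 0 1}

/-- The element `σ_r ∈ Sp(2n,q)`. -/
def sigmaMat (F : Type*) [Field F] (n r : ℕ) : Mat F n :=
  Matrix.fromBlocks
    (Matrix.of fun i j : Fin n => if i = j ∧ r ≤ (i : ℕ) then 1 else 0)
    (Matrix.of fun i j : Fin n => if i = j ∧ (i : ℕ) < r then 1 else 0)
    (Matrix.of fun i j : Fin n => if i = j ∧ (i : ℕ) < r then 1 else 0)
    (Matrix.of fun i j : Fin n => if i = j ∧ r ≤ (i : ℕ) then 1 else 0)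

/-- The double coset `P σ_r P` in `Sp(2n,q)`. -/
def DCoset (F : Type*) [Field F] (n r : ℕ) : Set (Mat F n) :=
  {w | ∃ p ∈ Pmat F n, ∃ p' ∈ Pmat F n, w = p * sigmaMat F n r * p'}

/-- `DC⁻(n,q) = P σ_(n−1) P`. -/
def DCneg (F : Type*) [Field F] (n : ℕ) : Set (Mat F n) := DCoset F n (n - 1)

/-- `DC⁺(n,q) = P σ_(n−2) P`. -/
def DCpos (F : Type*) [Field F] (n : ℕ) : Set (Mat F n) := DCoset F n (n - 2)

/-- `N_S(β) = |{w ∈ S : Tr w = β}|`. -/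
def NDC (F : Type*) [Field F] [Fintype F] (n : ℕ) (S : Set (Mat F n)) (β : F) : ℕ :=
  (Finset.univ.filter fun w => w ∈ S ∧ Matrix.trace w = β).card

/-- Hamming weight of a binary word. -/
def wordWeight {α : Type*} [Fintype α] (u : α → ZMod 2) : ℕ :=
  (Finset.univ.filter fun x => u x = 1).card

/-- The number of codewords of Hamming weight `j` in the binary code `C(S)`
consisting of all `u ∈ F_2^S` with `∑_{w ∈ S} u(w)·Tr(w) = 0` in `F`. -/
def weightCount (F : Type*) [Field F] [Fintype F] (n : ℕ) (S : Set (Mat F n)) (j : ℕ) : ℕ :=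
  Nat.card {u : S → ZMod 2 //
    (∑ w : S, if u w = 1 then Matrix.trace (w : Mat F n) else 0) = 0 ∧ wordWeight u = j}

/-- The Kloosterman sum `K(ψ;a)` for a general (complex-valued) additive character. -/
def KlC (F : Type*) [Field F] [Fintype F] (ψ : AddChar F ℂ) (a : F) : ℂ :=
  ∑ α : Fˣ, ψ ((α : F) + a * ((α : F))⁻¹)

/-- The Kloosterman sum `K_{GL(t,q)}(ψ;a)` for the general linear group. -/
def KGL (F : Type*) [Field F] [Fintype F] (ψ : AddChar F ℂ) (t : ℕ) (a : F) : ℂ :=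
  ∑ w : Matrix.GeneralLinearGroup (Fin t) F,
    ψ (Matrix.trace (w : Matrix (Fin t) (Fin t) F) +
       a * Matrix.trace ((↑(w⁻¹) : Matrix (Fin t) (Fin t) F)))

/-- The exponential sum `∑_{w ∈ S} ψ(Tr w)` over a set of matrices. -/
def expSum (F : Type*) [Field F] [Fintype F] (n : ℕ) (S : Set (Mat F n))
    (ψ : AddChar F ℂ) : ℂ :=
  ∑ w ∈ Finset.univ.filter (fun w => w ∈ S), ψ (Matrix.trace w)

/-- The exponential sum `∑_{w ∈ S} λ(a·Tr w)` over a set of matrices. -/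
def expSumQ (F : Type*) [Field F] [Fintype F] (r n : ℕ) (S : Set (Mat F n)) (a : F) : ℚ :=
  ∑ w ∈ Finset.univ.filter (fun w => w ∈ S), lam F r (a * Matrix.trace w)

/-- `tr` as a map to `ZMod 2`. -/
def trZ (F : Type*) [Field F] (r : ℕ) (x : F) : ZMod 2 :=
  if trF F r x = 0 then 0 else 1
section Aux

variable {F : Type*} [Field F]

lemma trace_fromBlocks' {n : ℕ} (A B C D : Matrix (Fin n) (Fin n) F) :
    Matrix.trace (Matrix.fromBlocks A B C D) = Matrix.trace A + Matrix.trace D := by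
  simp [Matrix.trace, Matrix.diag, Fintype.sum_sum_type]

lemma Pmat_iff {n : ℕ} (w : Mat F n) :
    w ∈ Pmat F n ↔ ∃ A B : Matrix (Fin n) (Fin n) F, IsUnit A ∧ Bᵀ = B ∧
      w = Matrix.fromBlocks A (A * B) 0 (A⁻¹)ᵀ := by
  have key : ∀ A B : Matrix (Fin n) (Fin n) F,
      Matrix.fromBlocks A 0 0 (A⁻¹)ᵀ * Matrix.fromBlocks 1 B 0 1
        = Matrix.fromBlocks A (A * B) 0 (A⁻¹)ᵀ := by
    intro A B
    simp [Matrix.fromBlocks_multiply]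
  constructor
  · rintro ⟨A, B, h1, h2, rfl⟩
    exact ⟨A, B, h1, h2, (key A B)⟩
  · rintro ⟨A, B, h1, h2, rfl⟩
    exact ⟨A, B, h1, h2, (key A B).symm⟩

lemma one_mem_Pmat (n : ℕ) : (1 : Mat F n) ∈ Pmat F n := by
  refine ⟨1, 0, isUnit_one, by simp, ?_⟩
  simp [Matrix.fromBlocks_one]

lemma Pmat_mul {n : ℕ} {p p' : Mat F n} (hp : p ∈ Pmat F n) (hp' : p' ∈ Pmat F n) :
    p * p' ∈ Pmat F n := by
  rw [Pmat_iff] at hp hp' ⊢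
  obtain ⟨A, B, hA, hB, rfl⟩ := hp
  obtain ⟨A', B', hA', hB', rfl⟩ := hp'
  have hA'det : A' * A'⁻¹ = 1 :=
    Matrix.mul_nonsing_inv A' ((Matrix.isUnit_iff_isUnit_det A').mp hA')
  refine ⟨A * A', B' + A'⁻¹ * B * (A'⁻¹)ᵀ, hA.mul hA', ?_, ?_⟩
  · rw [transpose_add, hB']
    congr 1
    rw [Matrix.transpose_mul, Matrix.transpose_mul, transpose_transpose, hB,
      Matrix.mul_assoc]
  · have h12 : A * (A' * B') + (A * B) * (A'⁻¹)ᵀ = (A * A') * (B' + A'⁻¹ * B * (A'⁻¹)ᵀ) := by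
      rw [Matrix.mul_add]
      congr 1
      · rw [Matrix.mul_assoc]
      · simp only [Matrix.mul_assoc]
        rw [← Matrix.mul_assoc A' (A'⁻¹), hA'det, Matrix.one_mul]
    have h22 : (A⁻¹)ᵀ * (A'⁻¹)ᵀ = ((A * A')⁻¹)ᵀ := by
      rw [Matrix.mul_inv_rev, Matrix.transpose_mul]
    rw [Matrix.fromBlocks_multiply]
    simp [h12, h22]

lemma sigma_zero (n : ℕ) : sigmaMat F n 0 = 1 := by
  unfold sigmaMat
  have h1 : (Matrix.of fun i j : Fin n => if i = j ∧ 0 ≤ (i : ℕ) then (1 : F) else 0) = 1 := by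
    ext i j
    simp [Matrix.one_apply]
  have h2 : (Matrix.of fun i j : Fin n => if i = j ∧ (i : ℕ) < 0 then (1 : F) else 0) = 0 := by
    ext i j
    simp
  rw [h1, h2, Matrix.fromBlocks_one]

lemma trace_stdBasisMatrix_mul {I : Type*} [Fintype I] [DecidableEq I]
    (i j : I) (c : F) (M : Matrix I I F) :
    Matrix.trace (Matrix.single i j c * M) = c * M j i := by
  unfold Matrix.trace
  rw [Finset.sum_eq_single i]
  · simp [Matrix.diag]
  · intro b _ hb
    simp [Matrix.diag, Matrix.single_mul_apply_of_ne _ _ _ _ _ hb]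
  · simp

end Aux

section Aux2

variable {F : Type*} [Field F] [Fintype F]

lemma addSelf {r : ℕ} (hr : 0 < r) (h : Fintype.card F = 2 ^ r) (x : F) : x + x = 0 := by
  have h0 : ((Fintype.card F : ℕ) : F) = 0 := FiniteField.cast_card_eq_zero F
  rw [h] at h0
  push_cast at h0
  have h2 : (2 : F) = 0 := by
    exact (pow_eq_zero_iff hr.ne').mp h0
  rw [← two_mul, h2, zero_mul]

lemma eq_zero_or_one (h2 : Fintype.card F = 2) (x : F) : x = 0 ∨ x = 1 := by
  have hcard : ({0, 1} : Finset F).card = 2 := by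
    rw [Finset.card_insert_of_notMem (by simp), Finset.card_singleton]
  have huniv : ({0, 1} : Finset F) = Finset.univ :=
    Finset.eq_univ_of_card _ (by rw [hcard, h2])
  have : x ∈ ({0, 1} : Finset F) := huniv ▸ Finset.mem_univ x
  simpa using this

lemma trace_inv_two (A : Matrix (Fin 2) (Fin 2) F) (h : A.det = 1) :
    Matrix.trace A⁻¹ = Matrix.trace A := by
  rw [Matrix.inv_def, h, Ring.inverse_one, one_smul, Matrix.adjugate_fin_two,
    Matrix.trace_fin_two_of, Matrix.trace_fin_two]
  exact add_comm _ _

lemma trace_Pmat_two (h2 : Fintype.card F = 2) {w : Mat F 2} (hw : w ∈ Pmat F 2) :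
    Matrix.trace w = 0 := by
  rw [Pmat_iff] at hw
  obtain ⟨A, B, hA, hB, rfl⟩ := hw
  have hdet : A.det = 1 := by
    rcases eq_zero_or_one h2 A.det with h | h
    · exact absurd h ((Matrix.isUnit_iff_isUnit_det A).mp hA).ne_zero
    · exact h
  rw [trace_fromBlocks', Matrix.trace_transpose, trace_inv_two A hdet]
  exact addSelf one_pos (by rw [h2]; norm_num) _

lemma DCpos_two : DCpos F 2 = Pmat F 2 := by
  have hσ : sigmaMat F 2 (2 - 2) = 1 := by
    rw [show (2 : ℕ) - 2 = 0 from rfl]; exact sigma_zero 2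
  ext w
  constructor
  · rintro ⟨p, hp, p', hp', rfl⟩
    rw [hσ, mul_one]
    exact Pmat_mul hp hp'
  · intro hw
    exact ⟨w, hw, 1, one_mem_Pmat 2, by rw [hσ, mul_one, mul_one]⟩

end Aux2

section Aux3

variable {F : Type*} [Field F] [Fintype F]

private def fP (x : (GL (Fin 2) F) × (F × F × F)) : Mat F 2 :=
  Matrix.fromBlocks (x.1 : Matrix (Fin 2) (Fin 2) F)
    ((x.1 : Matrix (Fin 2) (Fin 2) F) * !![x.2.1, x.2.2.1; x.2.2.1, x.2.2.2]) 0
    (((x.1 : Matrix (Fin 2) (Fin 2) F))⁻¹)ᵀ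

lemma fP_injective : Function.Injective (fP (F := F)) := by
  rintro ⟨u, a, b, d⟩ ⟨u', a', b', d'⟩ h
  have h11 : (u : Matrix (Fin 2) (Fin 2) F) = u' := by
    have := congrArg Matrix.toBlocks₁₁ h
    simpa [fP, Matrix.toBlocks_fromBlocks₁₁] using this
  have h12 : (u : Matrix (Fin 2) (Fin 2) F) * !![a, b; b, d]
      = (u : Matrix (Fin 2) (Fin 2) F) * !![a', b'; b', d'] := by
    have := congrArg Matrix.toBlocks₁₂ h
    simpa [fP, Matrix.toBlocks_fromBlocks₁₂, h11] using this
  have hM : !![a, b; b, d] = !![a', b'; b', d'] := by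
    have hdet : IsUnit (u : Matrix (Fin 2) (Fin 2) F).det :=
      (Matrix.isUnit_iff_isUnit_det _).mp u.isUnit
    have := congrArg (fun M => ((u : Matrix (Fin 2) (Fin 2) F))⁻¹ * M) h12
    simpa [← Matrix.mul_assoc, Matrix.nonsing_inv_mul _ hdet] using this
  have ha : a = a' := by simpa using congrFun (congrFun hM 0) 0
  have hb : b = b' := by simpa using congrFun (congrFun hM 0) 1
  have hd : d = d' := by simpa using congrFun (congrFun hM 1) 1
  have hu : u = u' := Units.ext h11
  subst ha hb hd hu
  rfl

lemma image_fP :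
    Finset.image (fP (F := F)) Finset.univ
      = Finset.univ.filter (fun w : Mat F 2 => w ∈ Pmat F 2) := by
  ext w
  simp only [Finset.mem_image, Finset.mem_filter, Finset.mem_univ, true_and]
  constructor
  · rintro ⟨⟨u, a, b, d⟩, rfl⟩
    rw [Pmat_iff]
    refine ⟨u, !![a, b; b, d], u.isUnit, ?_, rfl⟩
    ext i j
    fin_cases i <;> fin_cases j <;> simp
  · intro hw
    rw [Pmat_iff] at hw
    obtain ⟨A, B, hA, hB, rfl⟩ := hw
    refine ⟨⟨hA.unit, B 0 0, B 0 1, B 1 1⟩, ?_⟩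
    have hB10 : B 1 0 = B 0 1 := by
      have := congrFun (congrFun hB 1) 0
      simpa [Matrix.transpose_apply] using this.symm
    have hBeq : !![B 0 0, B 0 1; B 0 1, B 1 1] = B := by
      ext i j
      fin_cases i <;> fin_cases j <;> simp [hB10]
    simp [fP, hA.unit_spec, hBeq]

lemma card_Pmat_two (h2 : Fintype.card F = 2) :
    (Finset.univ.filter (fun w : Mat F 2 => w ∈ Pmat F 2)).card = 48 := by
  rw [← image_fP, Finset.card_image_of_injective _ fP_injective, Finset.card_univ,
    Fintype.card_prod, Fintype.card_prod, Fintype.card_prod]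
  have hGL : Fintype.card (GL (Fin 2) F) = 6 := by
    have := Matrix.card_GL_field (𝔽 := F) 2
    rw [Nat.card_eq_fintype_card] at this
    rw [this, Fin.prod_univ_two, h2]
    norm_num
  rw [hGL, h2]

end Aux3

theorem NDC_pos_positivity
    (F : Type*) [Field F] [Fintype F] (r q : ℕ) (hr : 0 < r) (hq : q = 2 ^ r)
    (hF : Fintype.card F = q) (n : ℕ) :
    ((Even n ∧ 4 ≤ n) ∨ (n = 2 ∧ 4 ≤ q) → ∀ β : F, 0 < NDC F n (DCpos F n) β) ∧
    (n = 2 → q = 2 →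
      NDC F 2 (DCpos F 2) (1 : F) = 0 ∧ NDC F 2 (DCpos F 2) (0 : F) = 48) := by
  have hadd : ∀ x : F, x + x = 0 := fun x => addSelf hr (by rw [hF, hq]) x
  constructor
  · rintro (⟨-, hn4⟩ | ⟨rfl, hq4⟩) β
    · -- even n, 4 ≤ n
      obtain ⟨i0, hi0v⟩ : ∃ i : Fin n, (i : ℕ) = 0 := ⟨⟨0, by omega⟩, rfl⟩
      set B : Matrix (Fin n) (Fin n) F := Matrix.single i0 i0 β with hBdef
      have hBsym : Bᵀ = B := by
        ext a b
        simp [hBdef, Matrix.single, Matrix.transpose_apply, and_comm]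
      set p : Mat F n := Matrix.fromBlocks 1 B 0 1 with hpdef
      have hp : p ∈ Pmat F n := by
        rw [Pmat_iff]
        exact ⟨1, B, isUnit_one, hBsym, by rw [hpdef]; simp [inv_one]⟩
      have hw : p * sigmaMat F n (n - 2) ∈ DCpos F n :=
        ⟨p, hp, 1, one_mem_Pmat n, by rw [mul_one]⟩
      have hsplit : p = 1 + Matrix.single (Sum.inl i0) (Sum.inr i0) β := by
        rw [hpdef, hBdef]
        ext (a | a) (b | b) <;>
          simp [Matrix.single, Matrix.one_apply]
      have htr : Matrix.trace (p * sigmaMat F n (n - 2)) = β := by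
        rw [hsplit, add_mul, one_mul, Matrix.trace_add]
        have h1 : Matrix.trace (sigmaMat F n (n - 2)) = 0 := by
          unfold sigmaMat
          rw [trace_fromBlocks']
          exact hadd _
        have h2 : Matrix.trace
            (Matrix.single (Sum.inl i0) (Sum.inr i0) β * sigmaMat F n (n - 2)) = β := by
          rw [trace_stdBasisMatrix_mul]
          have hlt : (i0 : ℕ) < n - 2 := by omega
          simp [sigmaMat, hlt]
        rw [h1, h2, zero_add]
      exact Finset.card_pos.mpr ⟨_, Finset.mem_filter.mpr ⟨Finset.mem_univ _, hw, htr⟩⟩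
    · -- n = 2, 4 ≤ q
      have hsub : ¬ (Finset.univ : Finset F) ⊆ {0, 1} := by
        intro hsb
        have h1 := Finset.card_le_card hsb
        have h2 : ({0, 1} : Finset F).card ≤ 2 := (Finset.card_insert_le _ _).trans (by simp)
        rw [Finset.card_univ, hF] at h1
        omega
      obtain ⟨d, -, hd⟩ := Finset.not_subset.mp hsub
      simp only [Finset.mem_insert, Finset.mem_singleton, not_or] at hd
      obtain ⟨hd0, hd1⟩ := hd
      have hneg : -d = d := by rw [neg_eq_iff_add_eq_zero]; exact hadd d
      have hs : (1 : F) + d⁻¹ ≠ 0 := by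
        intro h
        have : d⁻¹ = 1 := add_left_cancel (h.trans (hadd 1).symm)
        exact hd1 (inv_eq_one.mp this)
      set t : F := β * (1 + d⁻¹)⁻¹ with htdef
      set A : Matrix (Fin 2) (Fin 2) F := !![0, d; 1, t] with hAdef
      have hdet : A.det = -d := by rw [hAdef, Matrix.det_fin_two_of]; ring
      have hAu : IsUnit A := (Matrix.isUnit_iff_isUnit_det A).mpr
        (by rw [hdet]; exact isUnit_iff_ne_zero.mpr (neg_ne_zero.mpr hd0))
      have hwP : Matrix.fromBlocks A (A * 0) 0 (A⁻¹)ᵀ ∈ Pmat F 2 :=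
        (Pmat_iff _).mpr ⟨A, 0, hAu, by simp, rfl⟩
      have hw : Matrix.fromBlocks A (A * 0) 0 (A⁻¹)ᵀ ∈ DCpos F 2 := by
        rw [DCpos_two]; exact hwP
      have htrA : Matrix.trace A = t := by rw [hAdef, Matrix.trace_fin_two_of, zero_add]
      have htrAinv : Matrix.trace A⁻¹ = d⁻¹ * t := by
        rw [Matrix.inv_def, hdet, Matrix.trace_smul, hAdef, Matrix.adjugate_fin_two_of,
          Matrix.trace_fin_two_of]
        rw [hneg]
        simp [Ring.inverse_eq_inv', smul_eq_mul]
      have htr : Matrix.trace (Matrix.fromBlocks A (A * 0) 0 (A⁻¹)ᵀ) = β := by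
        rw [trace_fromBlocks', Matrix.trace_transpose, htrA, htrAinv]
        have hstep : t + d⁻¹ * t = (1 + d⁻¹) * t := by ring
        rw [hstep, htdef, mul_comm β, ← mul_assoc, mul_inv_cancel₀ hs, one_mul]
      exact Finset.card_pos.mpr ⟨_, Finset.mem_filter.mpr ⟨Finset.mem_univ _, hw, htr⟩⟩
  · intro _ hq2
    have hcard : Fintype.card F = 2 := by rw [hF, hq2]
    constructor
    · unfold NDC
      apply Finset.card_eq_zero.mpr
      rw [Finset.filter_eq_empty_iff]
      intro w _
      rintro ⟨hw, htr⟩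
      rw [DCpos_two] at hw
      rw [trace_Pmat_two hcard hw] at htr
      exact zero_ne_one htr
    · unfold NDC
      have hset : ∀ w : Mat F 2, w ∈ Finset.univ →
          ((w ∈ DCpos F 2 ∧ Matrix.trace w = 0) ↔ w ∈ Pmat F 2) := by
        intro w _
        constructor
        · rintro ⟨hw, -⟩; rwa [DCpos_two] at hw
        · intro hw
          refine ⟨?_, trace_Pmat_two hcard hw⟩
          rw [DCpos_two]; exact hw
      rw [Finset.filter_congr hset, card_Pmat_two hcard]
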